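/- The steady counting function is a persistence function: for every filtration F with finite steady sets, the function σ^𝓕_F(u ≤ v) := |S^𝓕_F(u ≤ v)| satisfies, for all u₁ ≤ u₂ ≤ v₁ ≤ v₂: (1) σ(u₁ ≤ v₁) ≤ σ(u₂ ≤ v₁), (2) σ(u₂ ≤ v₂) ≤ σ(u₂ ≤ v₁), (3) σ(u₂ ≤ v₁) − σ(u₁ ≤ v₁) ≥ σ(u₂ ≤ v₂) − σ(u₁ ≤ v₂). -/

import Mathlib

open CategoryTheory

universe u v

/-- A feature on a finitely concrete mono category `(C, Φ)`: for each object `X`,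
a collection of subsets of the underlying set `Φ.obj X`. -/
def Feature {C : Type u} [Category.{v} C] (Φ : C ⥤ Type v) :=
  ∀ X : C, Set (Set (Φ.obj X))

/-- The steady `𝓕`-sets of a filtration `F` at `(a ≤ b)`. -/
def steadySet {C : Type u} [Category.{v} C] (Φ : C ⥤ Type v) (𝓕 : Feature Φ)
    (F : ℝ ⥤ C) (a b : ℝ) : Set (Set (Φ.obj (F.obj a))) :=
  {A | ∀ (w : ℝ) (h1 : a ≤ w), w ≤ b → Φ.map (F.map (homOfLE h1)) '' A ∈ 𝓕 (F.obj w)}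

/-- The ranging `𝓕`-sets of a filtration `F` at `(a ≤ b)`. -/
def rangingSet {C : Type u} [Category.{v} C] (Φ : C ⥤ Type v) (𝓕 : Feature Φ)
    (F : ℝ ⥤ C) (a b : ℝ) : Set (Set (Φ.obj (F.obj a))) :=
  {A | ∃ (x y : ℝ) (hx : x ≤ a) (_ : b ≤ y) (hy : a ≤ y) (A' : Set (Φ.obj (F.obj x))),
      A' ∈ 𝓕 (F.obj x) ∧ A = Φ.map (F.map (homOfLE hx)) '' A' ∧
      Φ.map (F.map (homOfLE hy)) '' A ∈ 𝓕 (F.obj y)}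

/-- the steady counting function `σ^𝓕_F` is a persistence function. -/
theorem steady_counting_is_persistence_function {C : Type u} [Category.{v} C] (Φ : C ⥤ Type v)
    (hfin : ∀ X : C, Finite (Φ.obj X)) (hfaith : Φ.Faithful)
    (hinj : ∀ {X Y : C} (f : X ⟶ Y), Function.Injective (Φ.map f))
    (hmono : ∀ {X Y : C} (f : X ⟶ Y), Mono f)
    (𝓕 : Feature Φ)
    (hiso : ∀ {X Y : C} (f : X ≅ Y) (A : Set (Φ.obj X)), A ∈ 𝓕 X ↔ Φ.map f.hom '' A ∈ 𝓕 Y)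
    (F : ℝ ⥤ C) (σ : ℝ → ℝ → ℤ)
    (hσ : ∀ a b : ℝ, σ a b = (Nat.card (steadySet Φ 𝓕 F a b) : ℤ))
    (u₁ u₂ v₁ v₂ : ℝ) (h1 : u₁ ≤ u₂) (h2 : u₂ ≤ v₁) (h3 : v₁ ≤ v₂) :
    σ u₁ v₁ ≤ σ u₂ v₁ ∧ σ u₂ v₂ ≤ σ u₂ v₁ ∧
      σ u₂ v₂ - σ u₁ v₂ ≤ σ u₂ v₁ - σ u₁ v₁ := by

  classical
  set g : Φ.obj (F.obj u₁) → Φ.obj (F.obj u₂) := ⇑(Φ.map (F.map (homOfLE h1))) with hg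
  have hginj : Function.Injective g := hinj _
  have hfinj : Function.Injective (Set.image g) := Set.image_injective.2 hginj
  have _ := hfin (F.obj u₁)
  have _ := hfin (F.obj u₂)
  have key : ∀ (w : ℝ) (hw : u₂ ≤ w) (B : Set (Φ.obj (F.obj u₁))),
      Φ.map (F.map (homOfLE (h1.trans hw))) '' B
        = Φ.map (F.map (homOfLE hw)) '' (g '' B) := by
    intro w hw B
    have hcomp : F.map (homOfLE (h1.trans hw)) = F.map (homOfLE h1) ≫ F.map (homOfLE hw) := by
      rw [← F.map_comp, homOfLE_comp]
    rw [hg, hcomp, Φ.map_comp, types_comp, Set.image_comp]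
  have mapsto : ∀ (b : ℝ) (B : Set (Φ.obj (F.obj u₁))), B ∈ steadySet Φ 𝓕 F u₁ b →
      g '' B ∈ steadySet Φ 𝓕 F u₂ b := by
    intro b B hB w hw1 hw2
    rw [← key w hw1 B]
    exact hB w (h1.trans hw1) hw2
  have back : ∀ B ∈ steadySet Φ 𝓕 F u₁ v₁, g '' B ∈ steadySet Φ 𝓕 F u₂ v₂ →
      B ∈ steadySet Φ 𝓕 F u₁ v₂ := by
    intro B hB hgB w hw1 hw2
    by_cases hcase : w ≤ v₁
    · exact hB w hw1 hcase
    · have hw : u₂ ≤ w := h2.trans (le_of_not_ge hcase)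
      have h' := hgB w hw hw2
      rw [← key w hw B] at h'
      exact h'
  set s11 := steadySet Φ 𝓕 F u₁ v₁ with hs11
  set s12 := steadySet Φ 𝓕 F u₁ v₂ with hs12
  set s21 := steadySet Φ 𝓕 F u₂ v₁ with hs21
  set s22 := steadySet Φ 𝓕 F u₂ v₂ with hs22
  have hsub1 : Set.image g '' s11 ⊆ s21 := by
    rintro A ⟨B, hB, rfl⟩; exact mapsto v₁ B hB
  have hsub2 : Set.image g '' s12 ⊆ s22 := by
    rintro A ⟨B, hB, rfl⟩; exact mapsto v₂ B hB
  have hsub3 : s22 ⊆ s21 := fun A hA w hw1 hw2 => hA w hw1 (hw2.trans h3)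
  have hdiff : s22 \ (Set.image g '' s12) ⊆ s21 \ (Set.image g '' s11) := by
    rintro A ⟨hA, hnA⟩
    refine ⟨hsub3 hA, ?_⟩
    rintro ⟨B, hB, rfl⟩
    exact hnA ⟨B, back B hB hA, rfl⟩
  have a1 : s11.ncard ≤ s21.ncard := by
    rw [← Set.ncard_image_of_injective s11 hfinj]
    exact Set.ncard_le_ncard hsub1 (Set.toFinite _)
  have a2 : s22.ncard ≤ s21.ncard := Set.ncard_le_ncard hsub3 (Set.toFinite _)
  have e1 : (s22 \ (Set.image g '' s12)).ncard + (Set.image g '' s12).ncard = s22.ncard :=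
    Set.ncard_diff_add_ncard_of_subset hsub2 (Set.toFinite _)
  have e2 : (s21 \ (Set.image g '' s11)).ncard + (Set.image g '' s11).ncard = s21.ncard :=
    Set.ncard_diff_add_ncard_of_subset hsub1 (Set.toFinite _)
  have e3 : (Set.image g '' s12).ncard = s12.ncard := Set.ncard_image_of_injective _ hfinj
  have e4 : (Set.image g '' s11).ncard = s11.ncard := Set.ncard_image_of_injective _ hfinj
  have a3 : (s22 \ (Set.image g '' s12)).ncard ≤ (s21 \ (Set.image g '' s11)).ncard :=
    Set.ncard_le_ncard hdiff (Set.toFinite _)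
  have hc : ∀ a b : ℝ, Nat.card (steadySet Φ 𝓕 F a b) = (steadySet Φ 𝓕 F a b).ncard :=
    fun a b => Nat.card_coe_set_eq _
  rw [hσ u₁ v₁, hσ u₂ v₁, hσ u₂ v₂, hσ u₁ v₂, hc, hc, hc, hc, ← hs11, ← hs12, ← hs21, ← hs22]
  refine ⟨?_, ?_, ?_⟩ <;> omega
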